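/- arXiv:2503.03910 — 2 statements merged into one kernel-verified Lean document; each statement's English description precedes it below -/
import Mathlib

section
/- (Proposition 1, part 1: failure of the sample plug-in objective.) Fix p ∈ [1,∞] and constants 0 < k̲ ≤ k̄. There exist a distribution F₀, parameters α_t, Ω_t, welfare weights η_j and constant μ satisfying Assumptions 1, 2, 3 (one may take F₀ uniform on the four points {−1,1}×{−1,1}, α_t = 0, Ω_t = I₂, η_j = 1, μ = −1), and a constant K > 0 depending only on p, k̲, k̄ (not on J), such that for every J ≥ 1 and every choice of covariance matrices Σ_{1:J} with k̲ I₂ ⪯ Ψ_j ⪯ k̄ I₂ for all j: (1/N_p) · sup over local spending rules v : R^{2J} → B_p of E[ |⟨∇w* − ∇ŵ, v(Y_{1:J})⟩| ] ≥ K, where ∇w* = E[∇w | Y_{1:J}] is the oracle gradient. -/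
open MeasureTheory ProbabilityTheory Matrix Real Filter Set
open scoped ENNReal NNReal Classical

noncomputable section

namespace PolicyEB

abbrev V : Type := Fin 2 → ℝ
abbrev M2 : Type := Matrix (Fin 2) (Fin 2) ℝ

instance : MeasurableSpace M2 := (inferInstance : MeasurableSpace (Fin 2 → Fin 2 → ℝ))

attribute [local instance] Matrix.normedAddCommGroup Matrix.normedSpace

/-- Loewner partial order `A ⪯ B` on 2×2 real matrices. -/
def LoewnerLE (A B : M2) : Prop := (B - A).PosSemidef

/-- The standard bivariate Gaussian distribution on `ℝ²`. -/
def stdGauss2 : Measure V :=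
  Measure.map (fun p : ℝ × ℝ => ![p.1, p.2])
    ((gaussianReal 0 1).prod (gaussianReal 0 1))

/-- Lebesgue measure on `ℝ²`. -/
def vol2 : Measure V := Measure.pi fun _ => volume

/-- Euclidean norm on `ℝ²`. -/
def n2 (v : V) : ℝ := Real.sqrt (v 0 ^ 2 + v 1 ^ 2)

/-- Sup norm on `ℝ²`. -/
def ninf (v : V) : ℝ := max |v 0| |v 1|

/-- `ℓ² → ℓ²` operator norm of a 2×2 matrix. -/
def opN (A : M2) : ℝ := sSup {r : ℝ | ∃ x : V, n2 x ≤ 1 ∧ r = n2 (A.mulVec x)}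

/-- Frobenius norm of a 2×2 matrix. -/
def frobN (A : M2) : ℝ := Real.sqrt (∑ i, ∑ j, (A i j) ^ 2)

/-- Unnormalized Gaussian kernel `φ_Ψ(x) = exp(-½ xᵀ Ψ⁻¹ x)`. -/
def gk (Ψ : M2) (x : V) : ℝ := Real.exp (-(1 / 2) * (x ⬝ᵥ Ψ⁻¹.mulVec x))

/-- Normalizing constant `det(2πΨ)^{-1/2}` of a bivariate Gaussian. -/
def gconst (Ψ : M2) : ℝ := (Real.sqrt ((2 * π) ^ 2 * Ψ.det))⁻¹

/-- Mixture density `f_{F,Ψ}`. -/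
def mixD (F : Measure V) (Ψ : M2) (x : V) : ℝ := ∫ τ, gconst Ψ * gk Ψ (x - τ) ∂F

/-- Gradient `∇f_{F,Ψ}` of the mixture density. -/
def mixGrad (F : Measure V) (Ψ : M2) (x : V) : V :=
  ∫ τ, (gconst Ψ * gk Ψ (x - τ)) • Ψ⁻¹.mulVec (τ - x) ∂F

/-- Hessian `∇²f_{F,Ψ}` of the mixture density. -/
def mixHess (F : Measure V) (Ψ : M2) (x : V) : M2 :=
  ∫ τ, (gconst Ψ * gk Ψ (x - τ)) • (Ψ⁻¹ * vecMulVec (τ - x) (τ - x) * Ψ⁻¹ - Ψ⁻¹) ∂F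

/-- Posterior mean `E_{F,Ψ}[τ | z]`. -/
def postMean (F : Measure V) (Ψ : M2) (z : V) : V :=
  (∫ τ, gk Ψ (z - τ) ∂F)⁻¹ • ∫ τ, gk Ψ (z - τ) • τ ∂F

/-- Squared Hellinger distance between two densities on `ℝ²`. -/
def hellSq (f g : V → ℝ) : ℝ := (1 / 2) * ∫ z, (Real.sqrt (f z) - Real.sqrt (g z)) ^ 2 ∂vol2

/-- `ℓ^p` norm on `Fin J → ℝ` for `p ∈ [1,∞]`. -/
def pN {J : ℕ} (p : ℝ≥0∞) (v : Fin J → ℝ) : ℝ :=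
  if p = ⊤ then ⨆ j, |v j| else (∑ j, |v j| ^ p.toReal) ^ (1 / p.toReal)

/-- Unit `ℓ^p` ball in `ℝ^J`. -/
def Bp (J : ℕ) (p : ℝ≥0∞) : Set (Fin J → ℝ) := {v | pN p v ≤ 1}

/-- Normalization factor `N_p`. -/
def Np (J : ℕ) (p : ℝ≥0∞) : ℝ :=
  if p = ⊤ then (J : ℝ) else (J : ℝ) ^ ((p.toReal - 1) / p.toReal)

/-- `κ_J = (3/J) log (J / (2πe)^{1/3})`. -/
def kappaJ (J : ℕ) : ℝ := (3 / (J : ℝ)) * Real.log ((J : ℝ) / (2 * π * Real.exp 1) ^ ((1 : ℝ) / 3))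

/-- `φ₊(ρ) = √(log (1/(2πρ)²))`. -/
def phiPlus (ρ : ℝ) : ℝ := Real.sqrt (Real.log (1 / (2 * π * ρ) ^ 2))

variable {J T : ℕ} {Ωs : Type}

/-- True parameter `θ_j = α_{t_j} + Ω_{t_j}^{1/2} τ_j`. -/
def theta (t : Fin J → Fin T) (α : Fin T → V) (Ws : Fin T → M2)
    (τ : Fin J → Ωs → V) (j : Fin J) (ω : Ωs) : V :=
  α (t j) + (Ws (t j)).mulVec (τ j ω)

/-- Observation `Y_j = θ_j + Σ_j^{1/2} ε_j`. -/
def obsY (t : Fin J → Fin T) (α : Fin T → V) (Ws : Fin T → M2) (Ss : Fin J → M2)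
    (τ ε : Fin J → Ωs → V) (j : Fin J) (ω : Ωs) : V :=
  theta t α Ws τ j ω + (Ss j).mulVec (ε j ω)

/-- All observations `Y_{1:J}` as a map into `(ℝ²)^J`. -/
def Yall (t : Fin J → Fin T) (α : Fin T → V) (Ws : Fin T → M2) (Ss : Fin J → M2)
    (τ ε : Fin J → Ωs → V) (ω : Ωs) : Fin J → V :=
  fun j => obsY t α Ws Ss τ ε j ω

/-- Standardized observation `Z_j = Ω_{t_j}^{-1/2}(Y_j - α_{t_j})`. -/
def Zres (t : Fin J → Fin T) (α : Fin T → V) (Ws : Fin T → M2) (Ss : Fin J → M2)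
    (τ ε : Fin J → Ωs → V) (j : Fin J) (ω : Ωs) : V :=
  (Ws (t j))⁻¹.mulVec (obsY t α Ws Ss τ ε j ω - α (t j))

/-- Standardized noise covariance `Ψ_j = Ω_{t_j}^{-1/2} Σ_j Ω_{t_j}^{-1/2}`. -/
def PsiM (t : Fin J → Fin T) (Ws : Fin T → M2) (Ss : Fin J → M2) (j : Fin J) : M2 :=
  (Ws (t j))⁻¹ * (Ss j * Ss j) * (Ws (t j))⁻¹

/-- `Z̄_J = max(max_j ‖Z_j‖₂, 1)`. -/
def Zbar (t : Fin J → Fin T) (α : Fin T → V) (Ws : Fin T → M2) (Ss : Fin J → M2)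
    (τ ε : Fin J → Ωs → V) (ω : Ωs) : ℝ :=
  max (⨆ j, n2 (Zres t α Ws Ss τ ε j ω)) 1

/-- Oracle posterior mean `θ_j^*`. -/
def thetaStar (F0 : Measure V) (t : Fin J → Fin T) (α : Fin T → V) (Ws : Fin T → M2)
    (Ss : Fin J → M2) (τ ε : Fin J → Ωs → V) (j : Fin J) (ω : Ωs) : V :=
  α (t j) + (Ws (t j)).mulVec (postMean F0 (PsiM t Ws Ss j) (Zres t α Ws Ss τ ε j ω))

/-- Estimated standardized observation `Ẑ_j`. -/
def Zhat (t : Fin J → Fin T) (α : Fin T → V) (Ws : Fin T → M2) (Ss : Fin J → M2)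
    (τ ε : Fin J → Ωs → V) (ahat : Fin T → Ωs → V) (Whts : Fin T → Ωs → M2)
    (j : Fin J) (ω : Ωs) : V :=
  (Whts (t j) ω)⁻¹.mulVec (obsY t α Ws Ss τ ε j ω - ahat (t j) ω)

/-- Estimated standardized noise covariance `Ψ̂_j`. -/
def PsiHat (t : Fin J → Fin T) (Ss : Fin J → M2) (Whts : Fin T → Ωs → M2)
    (j : Fin J) (ω : Ωs) : M2 :=
  (Whts (t j) ω)⁻¹ * (Ss j * Ss j) * (Whts (t j) ω)⁻¹

/-- Empirical Bayes posterior mean `θ̂_j^*` built from an estimated prior `F̂`. -/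
def thetaHatStar (Fhat : Ωs → Measure V) (t : Fin J → Fin T) (α : Fin T → V)
    (Ws : Fin T → M2) (Ss : Fin J → M2) (τ ε : Fin J → Ωs → V)
    (ahat : Fin T → Ωs → V) (Whts : Fin T → Ωs → M2) (j : Fin J) (ω : Ωs) : V :=
  ahat (t j) ω + (Whts (t j) ω).mulVec
    (postMean (Fhat ω) (PsiHat t Ss Whts j ω) (Zhat t α Ws Ss τ ε ahat Whts j ω))

/-- `‖χ̂ - χ₀‖_∞`. -/
def chiDist (α : Fin T → V) (Ws : Fin T → M2) (ahat : Fin T → Ωs → V)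
    (Whts : Fin T → Ωs → M2) (ω : Ωs) : ℝ :=
  ⨆ u, max (ninf (ahat u ω - α u)) (opN (Whts u ω - Ws u))

/-- Gradient of the net welfare impact, `(∇w)_j = η_j WTP_j - μ G_j`. -/
def trueGrad (t : Fin J → Fin T) (α : Fin T → V) (Ws : Fin T → M2)
    (τ : Fin J → Ωs → V) (η : Fin J → ℝ) (μv : ℝ) (ω : Ωs) : Fin J → ℝ :=
  fun j => η j * theta t α Ws τ j ω 0 - μv * theta t α Ws τ j ω 1

/-- Sample plug-in gradient `(∇ŵ)_j = η_j WTP̂_j - μ Ĝ_j`. -/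
def plugGrad (t : Fin J → Fin T) (α : Fin T → V) (Ws : Fin T → M2) (Ss : Fin J → M2)
    (τ ε : Fin J → Ωs → V) (η : Fin J → ℝ) (μv : ℝ) (ω : Ωs) : Fin J → ℝ :=
  fun j => η j * obsY t α Ws Ss τ ε j ω 0 - μv * obsY t α Ws Ss τ ε j ω 1

/-- Oracle gradient `(∇w^*)_j = η_j WTP_j^* - μ G_j^*`. -/
def oracleGrad (F0 : Measure V) (t : Fin J → Fin T) (α : Fin T → V) (Ws : Fin T → M2)
    (Ss : Fin J → M2) (τ ε : Fin J → Ωs → V) (η : Fin J → ℝ) (μv : ℝ) (ω : Ωs) :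
    Fin J → ℝ :=
  fun j => η j * thetaStar F0 t α Ws Ss τ ε j ω 0 - μv * thetaStar F0 t α Ws Ss τ ε j ω 1

/-- Empirical Bayes gradient `(∇ŵ^*)_j = η_j WTP̂_j^* - μ Ĝ_j^*`. -/
def ebGrad (Fhat : Ωs → Measure V) (t : Fin J → Fin T) (α : Fin T → V) (Ws : Fin T → M2)
    (Ss : Fin J → M2) (τ ε : Fin J → Ωs → V) (ahat : Fin T → Ωs → V)
    (Whts : Fin T → Ωs → M2) (η : Fin J → ℝ) (μv : ℝ) (ω : Ωs) : Fin J → ℝ :=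
  fun j => η j * thetaHatStar Fhat t α Ws Ss τ ε ahat Whts j ω 0
    - μv * thetaHatStar Fhat t α Ws Ss τ ε ahat Whts j ω 1

/-- The basic data-generating process: `τ_j` i.i.d. from `F₀` (mean zero, identity covariance,
supported in the rectangle — Assumption 1), `ε_j` i.i.d. standard bivariate Gaussian, all of
`τ_1,…,τ_J,ε_1,…,ε_J` jointly independent, and positive (semi)definiteness of the
square-root scale and noise matrices. -/
structure Model [MeasurableSpace Ωs] (P : Measure Ωs) (t : Fin J → Fin T)
    (F0 : Measure V) (τ ε : Fin J → Ωs → V) (α : Fin T → V) (Ws : Fin T → M2)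
    (Ss : Fin J → M2) (swl swh sgl sgh : ℝ) : Prop where
  probP : IsProbabilityMeasure P
  probF : IsProbabilityMeasure F0
  meas_tau : ∀ j, Measurable (τ j)
  meas_eps : ∀ j, Measurable (ε j)
  indep : iIndepFun (β := fun _ : Fin J ⊕ Fin J => V)
    (Sum.elim τ ε) P
  law_tau : ∀ j, Measure.map (τ j) P = F0
  law_eps : ∀ j, Measure.map (ε j) P = stdGauss2
  mean0 : ∫ v, v ∂F0 = 0
  covId : ∀ i k : Fin 2, ∫ v, v i * v k ∂F0 = if i = k then 1 else 0
  suppF : ∀ᵐ v ∂F0, v 0 ∈ Set.Icc swl swh ∧ v 1 ∈ Set.Icc sgl sgh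
  Ws_psd : ∀ u, (Ws u).PosSemidef
  Omega_pd : ∀ u, (Ws u * Ws u).PosDef
  Ss_psd : ∀ j, (Ss j).PosSemidef
  Sigma_pd : ∀ j, (Ss j * Ss j).PosDef

/-- Assumption 3: `c̲ I₂ ⪯ Ω_t ⪯ c̄ I₂` for all types `t`. -/
structure Assump3 (Ws : Fin T → M2) (cl cu : ℝ) : Prop where
  lower : ∀ u, LoewnerLE (cl • (1 : M2)) (Ws u * Ws u)
  upper : ∀ u, LoewnerLE (Ws u * Ws u) (cu • (1 : M2))

/-- Assumption 4 on the location-scale estimators. -/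
structure Assump4 [MeasurableSpace Ωs] (P : Measure Ωs) (t : Fin J → Fin T)
    (α : Fin T → V) (Ws : Fin T → M2) (Ss : Fin J → M2) (τ ε : Fin J → Ωs → V)
    (ahat : Fin T → Ωs → V) (Whts : Fin T → Ωs → M2)
    (cl cu ml mu kl ku C1 C2 : ℝ) : Prop where
  what_psd : ∀ u ω, (Whts u ω).PosSemidef
  what_lower : ∀ u ω, LoewnerLE (cl • (1 : M2)) (Whts u ω * Whts u ω)
  what_upper : ∀ u ω, LoewnerLE (Whts u ω * Whts u ω) (cu • (1 : M2))
  count_lower : ∀ u, ml * J ≤ ((Finset.univ.filter fun j => t j = u).card : ℝ)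
  count_upper : ∀ u, ((Finset.univ.filter fun j => t j = u).card : ℝ) ≤ mu * J
  psi_lower : ∀ j, LoewnerLE (kl • (1 : M2)) (PsiM t Ws Ss j)
  psi_upper : ∀ j, LoewnerLE (PsiM t Ws Ss j) (ku • (1 : M2))
  meas_ahat : ∀ u,
    Measurable[MeasurableSpace.comap (Yall t α Ws Ss τ ε) inferInstance] (ahat u)
  meas_What : ∀ u,
    Measurable[MeasurableSpace.comap (Yall t α Ws Ss τ ε) inferInstance] (Whts u)
  chi_tail : P {ω | chiDist α Ws ahat Whts ω > C1 * Real.sqrt (Real.log J / J)}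
    ≤ ENNReal.ofReal (C2 / (J : ℝ) ^ 2)

/-- Assumption 5 on the estimated prior `F̂_J` (approximate NPMLE with bounded support). -/
structure Assump5 [MeasurableSpace Ωs] (P : Measure Ωs) (t : Fin J → Fin T)
    (α : Fin T → V) (Ws : Fin T → M2) (Ss : Fin J → M2) (τ ε : Fin J → Ωs → V)
    (ahat : Fin T → Ωs → V) (Whts : Fin T → Ωs → M2) (Fhat : Ωs → Measure V) : Prop where
  meas : Measurable[MeasurableSpace.comap (Yall t α Ws Ss τ ε) inferInstance] Fhat
  prob : ∀ ω, IsProbabilityMeasure (Fhat ω)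
  nearOpt : ∀ᵐ ω ∂P,
    sSup {r : ℝ | ∃ F : Measure V, IsProbabilityMeasure F ∧
        r = (1 / (J : ℝ)) * ∑ j, Real.log
          (∫ x, gk (PsiHat t Ss Whts j ω) (Zhat t α Ws Ss τ ε ahat Whts j ω - x) ∂F)}
      - kappaJ J
    ≤ (1 / (J : ℝ)) * ∑ j, Real.log
        (∫ x, gk (PsiHat t Ss Whts j ω) (Zhat t α Ws Ss τ ε ahat Whts j ω - x) ∂(Fhat ω))
  suppIn : ∀ᵐ ω ∂P,
    (Fhat ω) {x : V | n2 x ≤ ⨆ j, max (n2 (Zhat t α Ws Ss τ ε ahat Whts j ω)) 1}ᶜ = 0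

/-! ### Auxiliary definitions and lemmas for the proof -/

/-- Crude sign function: `1` if `0 ≤ x`, `-1` otherwise. -/
def sgn (x : ℝ) : ℝ := if 0 ≤ x then 1 else -1

lemma abs_sgn (x : ℝ) : |sgn x| = 1 := by unfold sgn; split <;> simp

lemma abs_sgn_le (x : ℝ) : |sgn x| ≤ 1 := le_of_eq (abs_sgn x)

lemma measurable_sgn : Measurable sgn :=
  Measurable.ite measurableSet_Ici measurable_const measurable_const

/-- The uniform distribution on the four points `{-1,1} × {-1,1}`. -/
def F0u : Measure V :=
  (4:ℝ≥0∞)⁻¹ • (Measure.dirac ![1,1] + Measure.dirac ![1,-1]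
    + Measure.dirac ![-1,1] + Measure.dirac ![-1,-1])

lemma integrable_dirac'' {E : Type*} [NormedAddCommGroup E] (f : V → E) (a : V) :
    Integrable f (Measure.dirac a) := by
  constructor
  · refine aestronglyMeasurable_const (b := f a) |>.congr ?_
    rw [ae_dirac_eq]; exact Filter.eventually_pure.2 rfl
  · rw [HasFiniteIntegral, lintegral_dirac]; exact ENNReal.coe_lt_top

lemma integral_F0u {E : Type*} [NormedAddCommGroup E] [NormedSpace ℝ E] [CompleteSpace E]
    (f : V → E) :
    ∫ v, f v ∂F0u = (4:ℝ)⁻¹ • (f ![1,1] + f ![1,-1] + f ![-1,1] + f ![-1,-1]) := by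
  rw [F0u, integral_smul_measure]
  rw [integral_add_measure (((integrable_dirac'' f _).add_measure (integrable_dirac'' f _)).add_measure (integrable_dirac'' f _)) (integrable_dirac'' f _)]
  rw [integral_add_measure ((integrable_dirac'' f _).add_measure (integrable_dirac'' f _)) (integrable_dirac'' f _)]
  rw [integral_add_measure (integrable_dirac'' f _) (integrable_dirac'' f _)]
  rw [integral_dirac f, integral_dirac f, integral_dirac f, integral_dirac f]
  simp [ENNReal.toReal_inv, add_assoc]

instance F0u_prob : IsProbabilityMeasure F0u := by
  constructor
  rw [F0u]
  simp [Measure.dirac_apply' _ MeasurableSet.univ]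
  rw [show ((4:ℝ≥0∞))⁻¹ + 4⁻¹ + 4⁻¹ + 4⁻¹ = 4 * 4⁻¹ by ring,
    ENNReal.mul_inv_cancel (by norm_num) (by norm_num)]

lemma F0u_mean : ∫ v, v ∂F0u = 0 := by
  rw [integral_F0u (fun v => v)]
  funext i
  fin_cases i <;> norm_num

lemma F0u_cov (i k : Fin 2) : ∫ v, v i * v k ∂F0u = if i = k then 1 else 0 := by
  rw [integral_F0u (fun v => v i * v k)]
  fin_cases i <;> fin_cases k <;> norm_num

lemma F0u_supp : ∀ᵐ v ∂F0u, v 0 ∈ Set.Icc (-1:ℝ) 1 ∧ v 1 ∈ Set.Icc (-1:ℝ) 1 := by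
  rw [F0u]
  refine Measure.ae_smul_measure ?_ _
  rw [ae_add_measure_iff, ae_add_measure_iff, ae_add_measure_iff]
  refine ⟨⟨⟨?_, ?_⟩, ?_⟩, ?_⟩ <;>
  · rw [ae_dirac_eq]
    refine Filter.eventually_pure.2 ?_
    norm_num

lemma integrable_id_gauss : Integrable (fun x : ℝ => x) (gaussianReal 0 1) := by
  rw [gaussianReal_of_var_ne_zero _ one_ne_zero]
  rw [integrable_withDensity_iff (g := fun x : ℝ => x) (measurable_gaussianPDF 0 1) (by
    exact Filter.Eventually.of_forall fun x => ENNReal.ofReal_lt_top)]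
  have : (fun x : ℝ => x * (gaussianPDF 0 1 x).toReal)
      = fun x : ℝ => (Real.sqrt (2 * π))⁻¹ * (x * Real.exp (-(1/2) * x ^ 2)) := by
    funext x
    rw [gaussianPDF, ENNReal.toReal_ofReal (gaussianPDFReal_nonneg _ _ _), gaussianPDFReal]
    push_cast
    ring_nf
  rw [this]
  exact (integrable_mul_exp_neg_mul_sq (by norm_num : (0:ℝ) < 1/2)).const_mul _

lemma measurable_mk2 : Measurable (fun p : ℝ × ℝ => (![p.1, p.2] : V)) := by
  refine measurable_pi_lambda _ fun i => ?_
  fin_cases i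
  · exact measurable_fst
  · exact measurable_snd

lemma measurePreserving_fst' {μ ν : Measure ℝ} [IsProbabilityMeasure ν] [SFinite μ] :
    MeasurePreserving Prod.fst (μ.prod ν) μ := by
  refine ⟨measurable_fst, ?_⟩
  rw [Measure.map_fst_prod]
  simp

lemma measurePreserving_snd'' {α β : Type*} [MeasurableSpace α] [MeasurableSpace β]
    {μ : Measure α} {ν : Measure β} [IsProbabilityMeasure μ] [SFinite ν] :
    MeasurePreserving Prod.snd (μ.prod ν) ν := by
  refine ⟨measurable_snd, ?_⟩
  rw [Measure.map_snd_prod]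
  simp

lemma integrable_coord_stdGauss2 (k : Fin 2) : Integrable (fun e : V => e k) stdGauss2 := by
  rw [stdGauss2, integrable_map_measure (measurable_pi_apply k).aestronglyMeasurable
    measurable_mk2.aemeasurable]
  fin_cases k
  · have h : Integrable (fun p : ℝ × ℝ => p.1) ((gaussianReal 0 1).prod (gaussianReal 0 1)) :=
      (measurePreserving_fst'.integrable_comp measurable_id.aestronglyMeasurable).2
        integrable_id_gauss
    refine h.congr (Filter.Eventually.of_forall fun p => ?_)
    simp
  · have h : Integrable (fun p : ℝ × ℝ => p.2) ((gaussianReal 0 1).prod (gaussianReal 0 1)) :=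
      (measurePreserving_snd''.integrable_comp measurable_id.aestronglyMeasurable).2
        integrable_id_gauss
    refine h.congr (Filter.Eventually.of_forall fun p => ?_)
    simp

instance stdGauss2_prob : IsProbabilityMeasure stdGauss2 := by
  rw [stdGauss2]; exact Measure.isProbabilityMeasure_map measurable_mk2.aemeasurable

/-- Gaussian tail mass used as the universal constant. -/
def qv (kl : ℝ) : ℝ := ((gaussianReal 0 1) (Set.Ici (2 * Real.sqrt 2 / Real.sqrt kl))).toReal

lemma qv_pos {kl : ℝ} : 0 < qv kl := by
  rw [qv]
  refine ENNReal.toReal_pos ?_ (measure_ne_top _ _)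
  intro h0
  rw [gaussianReal_apply _ one_ne_zero] at h0
  rw [lintegral_eq_zero_iff (measurable_gaussianPDF 0 1)] at h0
  have h1 : (volume.restrict (Set.Ici (2 * Real.sqrt 2 / Real.sqrt kl))) Set.univ = 0 := by
    refine measure_mono_null (fun x _ => ?_) h0
    simp only [Set.mem_setOf_eq, Pi.zero_apply]
    exact fun h => absurd h (gaussianPDF_pos 0 one_ne_zero x).ne'
  rw [Measure.restrict_apply_univ, Real.volume_Ici] at h1
  exact ENNReal.top_ne_zero h1

lemma gauss_symm (c : ℝ) :
    (gaussianReal 0 1) (Set.Iic (-c)) = (gaussianReal 0 1) (Set.Ici c) := by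
  have hmap : Measure.map (fun x : ℝ => -1 * x) (gaussianReal 0 1) = gaussianReal 0 1 := by
    rw [gaussianReal_map_const_mul]
    norm_num
  calc (gaussianReal 0 1) (Set.Iic (-c))
      = (gaussianReal 0 1) ((fun x : ℝ => -1 * x) ⁻¹' (Set.Ici c)) := by
        congr 1
        ext x
        simp only [Set.mem_Iic, Set.mem_preimage, Set.mem_Ici]
        constructor <;> intro h <;> linarith
    _ = (Measure.map (fun x : ℝ => -1 * x) (gaussianReal 0 1)) (Set.Ici c) := by
        rw [Measure.map_apply (by fun_prop) measurableSet_Ici]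
    _ = (gaussianReal 0 1) (Set.Ici c) := by rw [hmap]

lemma gfun_nonneg (x : ℝ) : 0 ≤ x * sgn (1 + x) + x * sgn (-1 + x) := by
  unfold sgn
  rcases le_or_gt 0 (-1 + x) with h | h
  · rw [if_pos (show (0:ℝ) ≤ 1 + x by linarith), if_pos h]; linarith
  · rcases le_or_gt 0 (1 + x) with h2 | h2
    · rw [if_pos h2, if_neg (not_le.2 h)]; nlinarith
    · rw [if_neg (not_le.2 h2), if_neg (not_le.2 h)]; nlinarith

lemma gfun_lb {x : ℝ} (hx : 2 ≤ x) : 4 ≤ x * sgn (1 + x) + x * sgn (-1 + x) := by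
  unfold sgn
  rw [if_pos (by linarith), if_pos (by linarith)]
  nlinarith

lemma measure_S_lb {kl a0 a1 : ℝ} (hkl : 0 < kl) (hsum : kl ≤ a0^2 + a1^2) :
    qv kl * qv kl ≤ (stdGauss2 {e : V | 2 ≤ a0 * e 0 + a1 * e 1}).toReal := by
  set c0 : ℝ := 2 * Real.sqrt 2 / Real.sqrt kl with hc0
  have hc0pos : 0 < c0 := by positivity
  set A0 : Set ℝ := if 0 ≤ a0 then Set.Ici c0 else Set.Iic (-c0) with hA0
  set A1 : Set ℝ := if 0 ≤ a1 then Set.Ici c0 else Set.Iic (-c0) with hA1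
  have hSmeas : MeasurableSet {e : V | 2 ≤ a0 * e 0 + a1 * e 1} := by
    have : Measurable (fun e : V => a0 * e 0 + a1 * e 1) := by fun_prop
    exact measurableSet_le measurable_const this
  have key : ∀ (a : ℝ) (p : ℝ), p ∈ (if 0 ≤ a then Set.Ici c0 else Set.Iic (-c0)) →
      0 ≤ a * p ∧ |a| * c0 ≤ a * p := by
    intro a p hp
    by_cases ha : 0 ≤ a
    · rw [if_pos ha] at hp
      have : c0 ≤ p := hp
      constructor
      · nlinarith
      · rw [abs_of_nonneg ha]
        exact mul_le_mul_of_nonneg_left this ha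
    · rw [if_neg ha] at hp
      push_neg at ha
      have hp' : p ≤ -c0 := hp
      constructor
      · nlinarith
      · rw [abs_of_neg ha]; nlinarith
  have hsqkl : (0:ℝ) < Real.sqrt kl := Real.sqrt_pos.2 hkl
  have hsq2 : (0:ℝ) < Real.sqrt 2 := Real.sqrt_pos.2 two_pos
  have hmax : Real.sqrt (kl/2) * c0 = 2 := by
    rw [Real.sqrt_div hkl.le, hc0]
    have h22 : Real.sqrt 2 * Real.sqrt 2 = 2 := Real.mul_self_sqrt (by norm_num)
    field_simp
  have hcase : Real.sqrt (kl/2) ≤ |a0| ∨ Real.sqrt (kl/2) ≤ |a1| := by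
    rcases le_or_gt (kl/2) (a0^2) with h | h
    · left
      calc Real.sqrt (kl/2) ≤ Real.sqrt (a0^2) := Real.sqrt_le_sqrt h
        _ = |a0| := Real.sqrt_sq_eq_abs a0
    · right
      have h1 : kl/2 ≤ a1^2 := by nlinarith
      calc Real.sqrt (kl/2) ≤ Real.sqrt (a1^2) := Real.sqrt_le_sqrt h1
        _ = |a1| := Real.sqrt_sq_eq_abs a1
  have hsub : A0 ×ˢ A1 ⊆ (fun p : ℝ × ℝ => (![p.1, p.2] : V)) ⁻¹' {e : V | 2 ≤ a0 * e 0 + a1 * e 1} := by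
    rintro p ⟨hp0, hp1⟩
    simp only [Set.mem_preimage, Set.mem_setOf_eq, Matrix.cons_val_zero, Matrix.cons_val_one,
      Matrix.head_cons]
    obtain ⟨k0a, k0b⟩ := key a0 p.1 hp0
    obtain ⟨k1a, k1b⟩ := key a1 p.2 hp1
    rcases hcase with hc | hc
    · have : (2:ℝ) ≤ |a0| * c0 := by
        rw [← hmax]; exact mul_le_mul_of_nonneg_right hc hc0pos.le
      linarith
    · have : (2:ℝ) ≤ |a1| * c0 := by
        rw [← hmax]; exact mul_le_mul_of_nonneg_right hc hc0pos.le
      linarith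
  have hμA0 : (gaussianReal 0 1) A0 = (gaussianReal 0 1) (Set.Ici c0) := by
    rw [hA0]; split
    · rfl
    · exact gauss_symm c0
  have hμA1 : (gaussianReal 0 1) A1 = (gaussianReal 0 1) (Set.Ici c0) := by
    rw [hA1]; split
    · rfl
    · exact gauss_symm c0
  have hmap : stdGauss2 {e : V | 2 ≤ a0 * e 0 + a1 * e 1}
      = ((gaussianReal 0 1).prod (gaussianReal 0 1))
        ((fun p : ℝ × ℝ => (![p.1, p.2] : V)) ⁻¹' {e : V | 2 ≤ a0 * e 0 + a1 * e 1}) := by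
    rw [stdGauss2, Measure.map_apply measurable_mk2 hSmeas]
  have hge : ((gaussianReal 0 1) (Set.Ici c0)) * ((gaussianReal 0 1) (Set.Ici c0))
      ≤ stdGauss2 {e : V | 2 ≤ a0 * e 0 + a1 * e 1} := by
    calc ((gaussianReal 0 1) (Set.Ici c0)) * ((gaussianReal 0 1) (Set.Ici c0))
        = ((gaussianReal 0 1) A0) * ((gaussianReal 0 1) A1) := by rw [hμA0, hμA1]
      _ = ((gaussianReal 0 1).prod (gaussianReal 0 1)) (A0 ×ˢ A1) :=
          (Measure.prod_prod A0 A1).symm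
      _ ≤ _ := by rw [hmap]; exact measure_mono hsub
  have := ENNReal.toReal_mono (measure_ne_top _ _) hge
  rw [ENNReal.toReal_mul] at this
  exact this

lemma measurable_X (a0 a1 : ℝ) : Measurable (fun e : V => a0 * e 0 + a1 * e 1) := by fun_prop

lemma integrable_X (a0 a1 : ℝ) : Integrable (fun e : V => a0 * e 0 + a1 * e 1) stdGauss2 :=
  ((integrable_coord_stdGauss2 0).const_mul a0).add ((integrable_coord_stdGauss2 1).const_mul a1)

lemma measurable_corefun (a0 a1 : ℝ) :
    Measurable (fun te : V × V =>
      (a0 * te.2 0 + a1 * te.2 1) * sgn (te.1 0 + (a0 * te.2 0 + a1 * te.2 1))) := by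
  have h1 : Measurable (fun te : V × V => a0 * te.2 0 + a1 * te.2 1) :=
    (measurable_X a0 a1).comp measurable_snd
  have h2 : Measurable (fun te : V × V => te.1 0) :=
    (measurable_pi_apply 0).comp measurable_fst
  exact h1.mul (measurable_sgn.comp (h2.add h1))

lemma core_lb {kl a0 a1 : ℝ} (hkl : 0 < kl) (hsum : kl ≤ a0^2 + a1^2) :
    2 * (qv kl * qv kl) ≤ ∫ te : V × V,
      (a0 * te.2 0 + a1 * te.2 1) * sgn (te.1 0 + (a0 * te.2 0 + a1 * te.2 1))
      ∂(F0u.prod stdGauss2) := by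
  set X : V → ℝ := fun e => a0 * e 0 + a1 * e 1 with hX
  have hXm : Measurable X := measurable_X a0 a1
  have habs : ∀ (c : ℝ) (e : V), ‖X e * sgn (c + X e)‖ ≤ |X e| := by
    intro c e
    rw [Real.norm_eq_abs, abs_mul]
    exact mul_le_of_le_one_right (abs_nonneg _) (abs_sgn_le _)
  have hXint : Integrable X stdGauss2 := integrable_X a0 a1
  have hint1 : ∀ c : ℝ, Integrable (fun e => X e * sgn (c + X e)) stdGauss2 := by
    intro c
    refine Integrable.mono' hXint.abs ?_ (Filter.Eventually.of_forall (habs c))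
    exact (hXm.mul (measurable_sgn.comp (measurable_const.add hXm))).aestronglyMeasurable
  have hfm : Measurable (fun te : V × V => X te.2 * sgn (te.1 0 + X te.2)) :=
    measurable_corefun a0 a1
  have hfint : Integrable (fun te : V × V => X te.2 * sgn (te.1 0 + X te.2))
      (F0u.prod stdGauss2) := by
    have hsnd : Integrable (fun te : V × V => |X te.2|) (F0u.prod stdGauss2) := by
      have := ((measurePreserving_snd'' (μ := F0u) (ν := stdGauss2)).integrable_comp
        hXm.aestronglyMeasurable).2 hXint
      exact this.abs
    refine Integrable.mono' hsnd hfm.aestronglyMeasurable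
      (Filter.Eventually.of_forall fun te => habs _ _)
  rw [integral_prod _ hfint]
  rw [integral_F0u (fun t => ∫ e, X e * sgn (t 0 + X e) ∂stdGauss2)]
  have e1 : (![1,1] : V) 0 = 1 := rfl
  have e2 : (![1,-1] : V) 0 = 1 := rfl
  have e3 : (![-1,1] : V) 0 = -1 := rfl
  have e4 : (![-1,-1] : V) 0 = -1 := rfl
  rw [e1, e2, e3, e4]
  set A : ℝ := ∫ e, X e * sgn (1 + X e) ∂stdGauss2 with hA
  set C : ℝ := ∫ e, X e * sgn (-1 + X e) ∂stdGauss2 with hC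
  have hsum' : A + C = ∫ e, (X e * sgn (1 + X e) + X e * sgn (-1 + X e)) ∂stdGauss2 :=
    (integral_add (hint1 1) (hint1 (-1))).symm
  have hind : 4 * (stdGauss2 {e : V | 2 ≤ X e}).toReal ≤ A + C := by
    rw [hsum']
    have hSm : MeasurableSet {e : V | 2 ≤ X e} := measurableSet_le measurable_const hXm
    have := integral_indicator_const (4:ℝ) hSm (μ := stdGauss2)
    rw [← mul_comm, ← smul_eq_mul, ← measureReal_def, ← this]
    refine integral_mono_of_nonneg ?_ ((hint1 1).add (hint1 (-1))) ?_
    · refine Filter.Eventually.of_forall fun e => ?_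
      by_cases he : e ∈ {e : V | 2 ≤ X e}
      · rw [Set.indicator_of_mem he]; norm_num
      · rw [Set.indicator_of_notMem he]; exact le_refl 0
    · refine Filter.Eventually.of_forall fun e => ?_
      by_cases he : e ∈ {e : V | 2 ≤ X e}
      · rw [Set.indicator_of_mem he]
        exact gfun_lb he
      · rw [Set.indicator_of_notMem he]
        exact gfun_nonneg (X e)
  have hq : qv kl * qv kl ≤ (stdGauss2 {e : V | 2 ≤ X e}).toReal := measure_S_lb hkl hsum
  calc 2 * (qv kl * qv kl)
      ≤ (4:ℝ)⁻¹ * (4 * (stdGauss2 {e : V | 2 ≤ X e}).toReal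
        + 4 * (stdGauss2 {e : V | 2 ≤ X e}).toReal) := by nlinarith [qv_pos (kl := kl)]
    _ ≤ (4:ℝ)⁻¹ • (A + A + C + C) := by
        rw [smul_eq_mul]
        have h4 : (0:ℝ) < 4⁻¹ := by norm_num
        refine mul_le_mul_of_nonneg_left ?_ h4.le
        nlinarith [hind]

lemma measurable_mulVec' (M : M2) : Measurable (fun e : V => M.mulVec e) := by
  refine measurable_pi_lambda _ fun i => ?_
  simp only [Matrix.mulVec, dotProduct]
  exact Finset.measurable_sum _ fun k _ => (measurable_pi_apply k).const_mul _

lemma int_mul_ind {Ωs : Type*} [MeasurableSpace Ωs] {P : Measure Ωs} {f : Ωs → ℝ}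
    (hf : Integrable f P) {A : Set Ωs} (hA : MeasurableSet A) (c : ℝ) :
    ∫ ω, f ω * (c * (A.indicator (fun _ => (1:ℝ)) ω - Aᶜ.indicator (fun _ => (1:ℝ)) ω)) ∂P
      = c * ((∫ ω in A, f ω ∂P) - ∫ ω in Aᶜ, f ω ∂P) := by
  have heq : ∀ ω, f ω * (c * (A.indicator (fun _ => (1:ℝ)) ω - Aᶜ.indicator (fun _ => (1:ℝ)) ω))
      = c * (A.indicator f ω - Aᶜ.indicator f ω) := by
    intro ω
    by_cases hω : ω ∈ A
    · rw [Set.indicator_of_mem hω, Set.indicator_of_notMem (Set.notMem_compl_iff.2 hω),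
        Set.indicator_of_mem hω, Set.indicator_of_notMem (Set.notMem_compl_iff.2 hω)]
      ring
    · rw [Set.indicator_of_notMem hω, Set.indicator_of_mem (Set.mem_compl hω),
        Set.indicator_of_notMem hω, Set.indicator_of_mem (Set.mem_compl hω)]
      ring
  simp_rw [heq]
  rw [integral_const_mul, integral_sub (hf.indicator hA) (hf.indicator hA.compl),
    integral_indicator hA, integral_indicator hA.compl]

lemma setIntegral_condexp_coord {Ωs : Type*} {m : MeasurableSpace Ωs}
    [mΩ : MeasurableSpace Ωs] {P : Measure Ωs} [IsFiniteMeasure P] (hm : m ≤ mΩ)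
    [SigmaFinite (P.trim hm)] {J : ℕ}
    {F : Ωs → (Fin J → ℝ)} (hF : Integrable F P) {B : Set Ωs} (hB : MeasurableSet[m] B)
    (j : Fin J) :
    ∫ ω in B, (MeasureTheory.condExp m P F) ω j ∂P = ∫ ω in B, F ω j ∂P := by
  have h := setIntegral_condExp hm hF hB
  let L : (Fin J → ℝ) →L[ℝ] ℝ := ContinuousLinearMap.proj j
  calc ∫ ω in B, (MeasureTheory.condExp m P F) ω j ∂P
      = L (∫ ω in B, (MeasureTheory.condExp m P F) ω ∂P) :=
        L.integral_comp_comm integrable_condExp.restrict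
    _ = L (∫ ω in B, F ω ∂P) := by rw [h]
    _ = ∫ ω in B, F ω j ∂P := (L.integral_comp_comm hF.restrict).symm

lemma abs_le_one_of_mem_Bp {J : ℕ} {p : ℝ≥0∞} (hp : 1 ≤ p) (hJ : 0 < J) {v : Fin J → ℝ}
    (hv : v ∈ Bp J p) (j : Fin J) : |v j| ≤ 1 := by
  haveI : NeZero J := ⟨hJ.ne'⟩
  unfold Bp pN at hv
  simp only [Set.mem_setOf_eq] at hv
  by_cases hptop : p = ⊤
  · rw [if_pos hptop] at hv
    exact le_trans (le_ciSup (f := fun i => |v i|)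
      (Set.Finite.bddAbove (Set.finite_range _)) j) hv
  · rw [if_neg hptop] at hv
    have hpt : 1 ≤ p.toReal := by
      have := ENNReal.toReal_mono hptop hp
      simpa using this
    have hpt0 : 0 < p.toReal := lt_of_lt_of_le one_pos hpt
    have h1 : |v j| ^ p.toReal ≤ ∑ i, |v i| ^ p.toReal :=
      Finset.single_le_sum (fun i _ => Real.rpow_nonneg (abs_nonneg _) _) (Finset.mem_univ j)
    have h2 : (|v j| ^ p.toReal) ^ (1/p.toReal) ≤ (∑ i, |v i| ^ p.toReal) ^ (1/p.toReal) :=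
      Real.rpow_le_rpow (Real.rpow_nonneg (abs_nonneg _) _) h1 (by positivity)
    have h3 : (|v j| ^ p.toReal) ^ (1/p.toReal) = |v j| := by
      rw [← Real.rpow_mul (abs_nonneg _), mul_one_div, div_self hpt0.ne', Real.rpow_one]
    rw [h3] at h2
    exact le_trans h2 hv


/-- Proposition 1, part 1: failure of the sample plug-in objective. -/
theorem prop_plug_in_objective (p : ℝ≥0∞) (hp : 1 ≤ p) (kl ku : ℝ)
    (hkl : 0 < kl) (hku : kl ≤ ku) :
    ∃ (F0 : Measure V) (swl swh sgl sgh : ℝ) (α0 : V) (Ws0 : M2)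
      (η0 muv Mbar cl cu : ℝ),
      IsProbabilityMeasure F0 ∧
      (∫ v, v ∂F0 = 0) ∧
      (∀ i k : Fin 2, ∫ v, v i * v k ∂F0 = if i = k then 1 else 0) ∧
      (∀ᵐ v ∂F0, v 0 ∈ Set.Icc swl swh ∧ v 1 ∈ Set.Icc sgl sgh) ∧
      |η0| ≤ Mbar ∧ 0 < cl ∧ cl ≤ cu ∧
      Ws0.PosSemidef ∧ (Ws0 * Ws0).PosDef ∧
      LoewnerLE (cl • (1 : M2)) (Ws0 * Ws0) ∧ LoewnerLE (Ws0 * Ws0) (cu • (1 : M2)) ∧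
      ∃ K : ℝ, 0 < K ∧
        ∀ (J T : ℕ), 1 ≤ J → 1 ≤ T →
        ∀ (Ωs : Type) (_ : MeasurableSpace Ωs) (P : Measure Ωs)
          (t : Fin J → Fin T) (τ ε : Fin J → Ωs → V) (Ss : Fin J → M2),
          Model P t F0 τ ε (fun _ => α0) (fun _ => Ws0) Ss swl swh sgl sgh →
          (∀ j, LoewnerLE (kl • (1 : M2)) (PsiM t (fun _ => Ws0) Ss j) ∧
                LoewnerLE (PsiM t (fun _ => Ws0) Ss j) (ku • (1 : M2))) →
          K ≤ (1 / Np J p) *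
            sSup {r : ℝ | ∃ v : (Fin J → V) → (Fin J → ℝ),
              Measurable v ∧ (∀ y, v y ∈ Bp J p) ∧
              r = ∫ ω, |∑ j,
                  (MeasureTheory.condExp
                      (MeasurableSpace.comap (Yall t (fun _ => α0) (fun _ => Ws0) Ss τ ε)
                        inferInstance) P
                      (trueGrad t (fun _ => α0) (fun _ => Ws0) τ (fun _ => η0) muv) ω j
                    - plugGrad t (fun _ => α0) (fun _ => Ws0) Ss τ ε (fun _ => η0) muv ω j)
                  * v (Yall t (fun _ => α0) (fun _ => Ws0) Ss τ ε ω) j| ∂P} := by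
  classical
  refine ⟨F0u, -1, 1, -1, 1, (0 : V), (1 : M2), 1, 0, 1, 1, 1,
    F0u_prob, F0u_mean, F0u_cov, F0u_supp, by norm_num, one_pos, le_refl 1,
    Matrix.PosSemidef.one, by rw [one_mul]; exact Matrix.PosDef.one,
    by unfold LoewnerLE; rw [one_mul, one_smul, sub_self]; exact Matrix.PosSemidef.zero,
    by unfold LoewnerLE; rw [one_mul, one_smul, sub_self]; exact Matrix.PosSemidef.zero,
    2 * (qv kl * qv kl), by nlinarith [qv_pos (kl := kl)], ?_⟩
  intro J T hJ hT Ωs mΩ P t τ ε Ss hM hPsi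
  haveI := hM.probP
  have hJ0 : 0 < J := hJ
  have hJR : (0:ℝ) < J := by exact_mod_cast hJ0
  haveI : NeZero J := ⟨hJ0.ne'⟩
  set K' : ℝ := 2 * (qv kl * qv kl) with hK'
  have hK'pos : 0 < K' := by rw [hK']; nlinarith [qv_pos (kl := kl)]
  have hsymm : ∀ j, Ss j 1 0 = Ss j 0 1 := by
    intro j
    have h := (hM.Ss_psd j).1
    have h2 := congrFun (congrFun h 0) 1
    rw [Matrix.conjTranspose_apply] at h2
    simpa using h2
  have hth : ∀ (j : Fin J) ω, theta t (fun _ => (0:V)) (fun _ => (1:M2)) τ j ω = τ j ω := by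
    intro j ω
    rw [theta, Matrix.one_mulVec, zero_add]
  have hmv : ∀ (j : Fin J) (e : V), ((Ss j).mulVec e) 0 = Ss j 0 0 * e 0 + Ss j 0 1 * e 1 := by
    intro j e
    simp [Matrix.mulVec, dotProduct, Fin.sum_univ_two]
  have hobs : ∀ (j : Fin J) ω, obsY t (fun _ => (0:V)) (fun _ => (1:M2)) Ss τ ε j ω
      = τ j ω + (Ss j).mulVec (ε j ω) := by
    intro j ω
    rw [obsY, hth]
  have hklj : ∀ j : Fin J, kl ≤ Ss j 0 0 ^ 2 + Ss j 0 1 ^ 2 := by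
    intro j
    have hPsiEq : PsiM t (fun _ => (1:M2)) Ss j = Ss j * Ss j := by
      rw [PsiM, inv_one, one_mul, mul_one]
    have h := (hPsi j).1
    rw [hPsiEq] at h
    have h2 := h.dotProduct_mulVec_nonneg ![1, 0]
    simp [Matrix.sub_mulVec, Matrix.mulVec, dotProduct, Fin.sum_univ_two,
      Matrix.mul_apply, Matrix.smul_apply, Matrix.one_apply, Matrix.sub_apply] at h2
    rw [hsymm j] at h2
    nlinarith [h2]
  set Yf := Yall t (fun _ => (0:V)) (fun _ => (1:M2)) Ss τ ε with hYf
  have hYm : Measurable Yf := by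
    rw [hYf]
    refine measurable_pi_lambda _ fun j => ?_
    have heq : (fun ω => obsY t (fun _ => (0:V)) (fun _ => (1:M2)) Ss τ ε j ω)
        = fun ω => τ j ω + (Ss j).mulVec (ε j ω) := funext fun ω => hobs j ω
    show Measurable fun ω => obsY t (fun _ => (0:V)) (fun _ => (1:M2)) Ss τ ε j ω
    rw [heq]
    exact (hM.meas_tau j).add ((measurable_mulVec' (Ss j)).comp (hM.meas_eps j))
  have hYco : ∀ ω (j : Fin J),
      Yf ω j 0 = τ j ω 0 + (Ss j 0 0 * ε j ω 0 + Ss j 0 1 * ε j ω 1) := by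
    intro ω j
    rw [hYf]
    show obsY t (fun _ => (0:V)) (fun _ => (1:M2)) Ss τ ε j ω 0 = _
    rw [hobs]
    show τ j ω 0 + ((Ss j).mulVec (ε j ω)) 0 = _
    rw [hmv]
  have hm : MeasurableSpace.comap Yf inferInstance ≤ mΩ := measurable_iff_comap_le.mp hYm
  haveI : SigmaFinite (P.trim hm) := by
    haveI : IsFiniteMeasure (P.trim hm) := isFiniteMeasure_trim hm
    infer_instance
  set G : Ωs → Fin J → ℝ :=
    trueGrad t (fun _ => (0:V)) (fun _ => (1:M2)) τ (fun _ => 1) 0 with hGdef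
  have hGco : ∀ ω (j : Fin J), G ω j = τ j ω 0 := by
    intro ω j
    rw [hGdef]
    show (1:ℝ) * theta t (fun _ => (0:V)) (fun _ => (1:M2)) τ j ω 0
        - 0 * theta t (fun _ => (0:V)) (fun _ => (1:M2)) τ j ω 1 = τ j ω 0
    rw [hth]
    ring
  have hGm : Measurable G := by
    refine measurable_pi_lambda _ fun j => ?_
    have heq : (fun ω => G ω j) = fun ω => τ j ω 0 := funext fun ω => hGco ω j
    rw [heq]
    exact (measurable_pi_apply 0).comp (hM.meas_tau j)
  have hsetm : MeasurableSet {v : V | v 0 ∈ Set.Icc (-1:ℝ) 1 ∧ v 1 ∈ Set.Icc (-1:ℝ) 1} :=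
    MeasurableSet.inter ((measurable_pi_apply 0) measurableSet_Icc)
      ((measurable_pi_apply 1) measurableSet_Icc)
  have hτbd : ∀ j : Fin J, ∀ᵐ ω ∂P, |τ j ω 0| ≤ 1 := by
    intro j
    have hsupp := hM.suppF
    rw [← hM.law_tau j] at hsupp
    have h2 := (ae_map_iff (hM.meas_tau j).aemeasurable hsetm).1 hsupp
    filter_upwards [h2] with ω hω
    exact abs_le.2 ⟨hω.1.1, hω.1.2⟩
  have hGint : Integrable G P := by
    refine Integrable.mono' (integrable_const (1:ℝ)) hGm.aestronglyMeasurable ?_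
    have hall := (ae_all_iff).2 hτbd
    filter_upwards [hall] with ω hω
    rw [pi_norm_le_iff_of_nonneg (by norm_num : (0:ℝ) ≤ 1)]
    intro j
    rw [hGco, Real.norm_eq_abs]
    exact hω j
  have hτ0int : ∀ j : Fin J, Integrable (fun ω => τ j ω 0) P := by
    intro j
    refine Integrable.mono' (integrable_const (1:ℝ))
      ((measurable_pi_apply 0).comp (hM.meas_tau j)).aestronglyMeasurable ?_
    filter_upwards [hτbd j] with ω hω
    rwa [Real.norm_eq_abs]
  have hεint : ∀ (j : Fin J) (k : Fin 2), Integrable (fun ω => ε j ω k) P := by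
    intro j k
    have h := integrable_coord_stdGauss2 k
    rw [← hM.law_eps j] at h
    exact (integrable_map_measure (measurable_pi_apply k).aestronglyMeasurable
      (hM.meas_eps j).aemeasurable).1 h
  set plug : Ωs → Fin J → ℝ :=
    plugGrad t (fun _ => (0:V)) (fun _ => (1:M2)) Ss τ ε (fun _ => 1) 0 with hplugdef
  have hplugco : ∀ ω (j : Fin J), plug ω j
      = τ j ω 0 + (Ss j 0 0 * ε j ω 0 + Ss j 0 1 * ε j ω 1) := by
    intro ω j
    rw [hplugdef]
    show (1:ℝ) * obsY t (fun _ => (0:V)) (fun _ => (1:M2)) Ss τ ε j ω 0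
        - 0 * obsY t (fun _ => (0:V)) (fun _ => (1:M2)) Ss τ ε j ω 1 = _
    rw [hobs]
    have h3 : (τ j ω + (Ss j).mulVec (ε j ω)) 0 = τ j ω 0 + ((Ss j).mulVec (ε j ω)) 0 := rfl
    rw [h3, hmv]
    ring
  have hplugint : ∀ j : Fin J, Integrable (fun ω => plug ω j) P := by
    intro j
    have heq : (fun ω => plug ω j)
        = fun ω => τ j ω 0 + (Ss j 0 0 * ε j ω 0 + Ss j 0 1 * ε j ω 1) :=
      funext fun ω => hplugco ω j
    rw [heq]
    exact (hτ0int j).add (((hεint j 0).const_mul _).add ((hεint j 1).const_mul _))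
  set cJ : ℝ := if p = ⊤ then 1 else (J:ℝ) ^ (-(p.toReal)⁻¹) with hcJ
  have hcJpos : 0 < cJ := by
    rw [hcJ]; split
    · exact one_pos
    · exact Real.rpow_pos_of_pos hJR _
  have hpt1 : p ≠ ⊤ → 1 ≤ p.toReal := by
    intro h
    have := ENNReal.toReal_mono h hp
    simpa using this
  have hcJNp : cJ * J = Np J p := by
    rw [hcJ, Np]
    by_cases h : p = ⊤
    · rw [if_pos h, if_pos h, one_mul]
    · rw [if_neg h, if_neg h]
      have h1 : 1 ≤ p.toReal := hpt1 h
      have h0 : p.toReal ≠ 0 := by positivity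
      have h2 : (J:ℝ) ^ (-(p.toReal)⁻¹) * (J:ℝ) ^ (1:ℝ) = (J:ℝ) ^ (-(p.toReal)⁻¹ + 1) :=
        (Real.rpow_add hJR _ _).symm
      have h3 : (p.toReal - 1)/p.toReal = -(p.toReal)⁻¹ + 1 := by field_simp; ring
      rw [h3, ← h2, Real.rpow_one]
  have hNppos : 0 < Np J p := by rw [← hcJNp]; positivity
  set vv : (Fin J → V) → Fin J → ℝ := fun y j => cJ * sgn (y j 0) with hvv
  have hvvm : Measurable vv := by
    refine measurable_pi_lambda _ fun j => ?_
    exact (measurable_sgn.comp ((measurable_pi_apply (0:Fin 2)).comp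
      (measurable_pi_apply j))).const_mul cJ
  have habsvv : ∀ y (j : Fin J), |vv y j| = cJ := by
    intro y j
    rw [hvv]
    show |cJ * sgn (y j 0)| = cJ
    rw [abs_mul, abs_sgn, mul_one, abs_of_pos hcJpos]
  have hvvBp : ∀ y, vv y ∈ Bp J p := by
    intro y
    unfold Bp pN
    simp only [Set.mem_setOf_eq]
    by_cases h : p = ⊤
    · rw [if_pos h]
      refine ciSup_le fun j => ?_
      rw [habsvv, hcJ, if_pos h]
    · rw [if_neg h]
      have h1 : 1 ≤ p.toReal := hpt1 h
      have h0 : 0 < p.toReal := lt_of_lt_of_le one_pos h1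
      have hsum : ∑ j : Fin J, |vv y j| ^ p.toReal = (J:ℝ) * cJ ^ p.toReal := by
        rw [Finset.sum_congr rfl fun j _ => by rw [habsvv y j]]
        rw [Finset.sum_const, Finset.card_univ, Fintype.card_fin, nsmul_eq_mul]
      rw [hsum, hcJ, if_neg h]
      rw [← Real.rpow_mul (le_of_lt hJR), neg_mul, inv_mul_cancel₀ h0.ne',
        Real.rpow_neg_one, mul_inv_cancel₀ (ne_of_gt hJR), Real.one_rpow]
  have hcondint : Integrable (MeasureTheory.condExp (MeasurableSpace.comap Yf inferInstance) P G) P := integrable_condExp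
  have hcondjint : ∀ j : Fin J, Integrable (fun ω => (MeasureTheory.condExp (MeasurableSpace.comap Yf inferInstance) P G) ω j) P :=
    fun j => (ContinuousLinearMap.proj (R := ℝ) (φ := fun _ : Fin J => ℝ) j).integrable_comp
      hcondint
  have hGjint : ∀ j : Fin J, Integrable (fun ω => G ω j) P :=
    fun j => (ContinuousLinearMap.proj (R := ℝ) (φ := fun _ : Fin J => ℝ) j).integrable_comp
      hGint
  have hΔint : ∀ j : Fin J, Integrable
      (fun ω => (MeasureTheory.condExp (MeasurableSpace.comap Yf inferInstance) P G) ω j - plug ω j) P :=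
    fun j => (hcondjint j).sub (hplugint j)
  have hvvYm : ∀ j : Fin J, Measurable (fun ω => vv (Yf ω) j) := by
    intro j
    have heq : (fun ω => vv (Yf ω) j) = fun ω => cJ * sgn (Yf ω j 0) := by
      funext ω; rw [hvv]
    rw [heq]
    exact (measurable_sgn.comp ((measurable_pi_apply (0:Fin 2)).comp
      ((measurable_pi_apply j).comp hYm))).const_mul cJ
  have hprodint : ∀ (j : Fin J) (f : Ωs → ℝ), Integrable f P →
      Integrable (fun ω => f ω * vv (Yf ω) j) P := by
    intro j f hf
    have h := Integrable.bdd_mul (c := cJ) hf (hvvYm j).aestronglyMeasurable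
      (Filter.Eventually.of_forall fun ω => by rw [Real.norm_eq_abs, habsvv])
    exact h.congr (Filter.Eventually.of_forall fun ω => mul_comm _ _)
  have keyj : ∀ j : Fin J,
      ∫ ω, ((MeasureTheory.condExp (MeasurableSpace.comap Yf inferInstance) P G) ω j - plug ω j) * vv (Yf ω) j ∂P
        ≤ -(cJ * K') := by
    intro j
    set A : Set Ωs := Yf ⁻¹' {y : Fin J → V | 0 ≤ y j 0} with hAdef
    have hsetA : MeasurableSet {y : Fin J → V | 0 ≤ y j 0} :=
      measurableSet_le measurable_const
        ((measurable_pi_apply (0:Fin 2)).comp (measurable_pi_apply j))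
    have hAmm : MeasurableSet[MeasurableSpace.comap Yf inferInstance] A := by
      rw [hAdef]
      exact ⟨_, hsetA, rfl⟩
    have hAm : MeasurableSet A := hm _ hAmm
    have hhd : ∀ ω, vv (Yf ω) j
        = cJ * (A.indicator (fun _ => (1:ℝ)) ω - Aᶜ.indicator (fun _ => (1:ℝ)) ω) := by
      intro ω
      by_cases hω : ω ∈ A
      · have h0 : 0 ≤ Yf ω j 0 := hω
        rw [hvv]
        show cJ * sgn (Yf ω j 0) = _
        rw [sgn, if_pos h0, Set.indicator_of_mem hω,
          Set.indicator_of_notMem (Set.notMem_compl_iff.2 hω)]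
        ring
      · have h0 : ¬ (0 ≤ Yf ω j 0) := hω
        rw [hvv]
        show cJ * sgn (Yf ω j 0) = _
        rw [sgn, if_neg h0, Set.indicator_of_notMem hω,
          Set.indicator_of_mem (Set.mem_compl hω)]
        ring
    have T1 : ∀ (f : Ωs → ℝ), Integrable f P →
        ∫ ω, f ω * vv (Yf ω) j ∂P
          = cJ * ((∫ ω in A, f ω ∂P) - ∫ ω in Aᶜ, f ω ∂P) := by
      intro f hf
      rw [show (fun ω => f ω * vv (Yf ω) j)
          = fun ω => f ω * (cJ * (A.indicator (fun _ => (1:ℝ)) ω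
              - Aᶜ.indicator (fun _ => (1:ℝ)) ω)) from funext fun ω => by rw [hhd ω]]
      exact int_mul_ind hf hAm cJ
    have hsplit : ∫ ω, ((MeasureTheory.condExp (MeasurableSpace.comap Yf inferInstance) P G) ω j - plug ω j) * vv (Yf ω) j ∂P
        = ∫ ω, (G ω j - plug ω j) * vv (Yf ω) j ∂P := by
      have e1 : (fun ω => ((MeasureTheory.condExp (MeasurableSpace.comap Yf inferInstance) P G) ω j - plug ω j) * vv (Yf ω) j)
          = fun ω => (MeasureTheory.condExp (MeasurableSpace.comap Yf inferInstance) P G) ω j * vv (Yf ω) j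
              - plug ω j * vv (Yf ω) j := funext fun ω => sub_mul _ _ _
      have e2 : (fun ω => (G ω j - plug ω j) * vv (Yf ω) j)
          = fun ω => G ω j * vv (Yf ω) j - plug ω j * vv (Yf ω) j :=
        funext fun ω => sub_mul _ _ _
      rw [e1, e2,
        integral_sub (hprodint j _ (hcondjint j)) (hprodint j _ (hplugint j)),
        integral_sub (hprodint j _ (hGjint j)) (hprodint j _ (hplugint j)),
        T1 _ (hcondjint j), T1 _ (hGjint j),
        setIntegral_condexp_coord hm hGint hAmm j,
        setIntegral_condexp_coord hm hGint hAmm.compl j]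
    rw [hsplit]
    have hco : ∀ ω, (G ω j - plug ω j) * vv (Yf ω) j
        = (-cJ) * ((Ss j 0 0 * ε j ω 0 + Ss j 0 1 * ε j ω 1) *
            sgn (τ j ω 0 + (Ss j 0 0 * ε j ω 0 + Ss j 0 1 * ε j ω 1))) := by
      intro ω
      have h1 : vv (Yf ω) j = cJ * sgn (Yf ω j 0) := by rw [hvv]
      rw [hGco, hplugco, h1, hYco]
      ring
    have heval : ∫ ω, (G ω j - plug ω j) * vv (Yf ω) j ∂P
        = -cJ * ∫ ω, ((Ss j 0 0 * ε j ω 0 + Ss j 0 1 * ε j ω 1) *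
            sgn (τ j ω 0 + (Ss j 0 0 * ε j ω 0 + Ss j 0 1 * ε j ω 1))) ∂P := by
      rw [show (fun ω => (G ω j - plug ω j) * vv (Yf ω) j)
          = fun ω => (-cJ) * ((Ss j 0 0 * ε j ω 0 + Ss j 0 1 * ε j ω 1) *
              sgn (τ j ω 0 + (Ss j 0 0 * ε j ω 0 + Ss j 0 1 * ε j ω 1)))
          from funext hco]
      exact integral_const_mul _ _
    rw [heval]
    have hpairm : Measurable (fun ω => (τ j ω, ε j ω)) :=
      (hM.meas_tau j).prodMk (hM.meas_eps j)
    have hmapeq : Measure.map (fun ω => (τ j ω, ε j ω)) P = F0u.prod stdGauss2 := by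
      have hind : IndepFun (τ j) (ε j) P :=
        hM.indep.indepFun (show (Sum.inl j : Fin J ⊕ Fin J) ≠ Sum.inr j by simp)
      rw [indepFun_iff_map_prod_eq_prod_map_map (hM.meas_tau j).aemeasurable
        (hM.meas_eps j).aemeasurable] at hind
      rw [hind, hM.law_tau j, hM.law_eps j]
    have hIlb := core_lb (a0 := Ss j 0 0) (a1 := Ss j 0 1) hkl (hklj j)
    rw [← hmapeq, integral_map hpairm.aemeasurable
      (measurable_corefun (Ss j 0 0) (Ss j 0 1)).aestronglyMeasurable] at hIlb
    have hIlb' : 2 * (qv kl * qv kl)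
        ≤ ∫ ω, ((Ss j 0 0 * ε j ω 0 + Ss j 0 1 * ε j ω 1) *
            sgn (τ j ω 0 + (Ss j 0 0 * ε j ω 0 + Ss j 0 1 * ε j ω 1))) ∂P :=
      le_trans hIlb (le_of_eq (integral_congr_ae (Filter.Eventually.of_forall fun ω => rfl)))
    have hfin : -cJ * ∫ ω, ((Ss j 0 0 * ε j ω 0 + Ss j 0 1 * ε j ω 1) *
            sgn (τ j ω 0 + (Ss j 0 0 * ε j ω 0 + Ss j 0 1 * ε j ω 1))) ∂P
        ≤ -cJ * (2 * (qv kl * qv kl)) :=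
      mul_le_mul_of_nonpos_left hIlb' (neg_nonpos.2 hcJpos.le)
    calc -cJ * ∫ ω, ((Ss j 0 0 * ε j ω 0 + Ss j 0 1 * ε j ω 1) *
            sgn (τ j ω 0 + (Ss j 0 0 * ε j ω 0 + Ss j 0 1 * ε j ω 1))) ∂P
        ≤ -cJ * (2 * (qv kl * qv kl)) := hfin
      _ = -(cJ * K') := by rw [hK']; ring
  set g : Ωs → ℝ := fun ω => ∑ j, ((MeasureTheory.condExp (MeasurableSpace.comap Yf inferInstance) P G) ω j - plug ω j) *
      vv (Yf ω) j with hg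
  have hsum_le : ∫ ω, g ω ∂P ≤ -(Np J p * K') := by
    rw [hg, integral_finset_sum _ (fun j _ => hprodint j _ (hΔint j))]
    calc ∑ j : Fin J, ∫ ω, ((MeasureTheory.condExp (MeasurableSpace.comap Yf inferInstance) P G) ω j - plug ω j) * vv (Yf ω) j ∂P
        ≤ ∑ _j : Fin J, -(cJ * K') := Finset.sum_le_sum fun j _ => keyj j
      _ = (J:ℝ) * -(cJ * K') := by
          rw [Finset.sum_const, Finset.card_univ, Fintype.card_fin, nsmul_eq_mul]
      _ = -(Np J p * K') := by rw [← hcJNp]; ring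
  have habsge : Np J p * K' ≤ ∫ ω, |g ω| ∂P := by
    have h1 : |∫ ω, g ω ∂P| ≤ ∫ ω, |g ω| ∂P := by
      simpa [Real.norm_eq_abs] using norm_integral_le_integral_norm (μ := P) g
    have h2 : Np J p * K' ≤ -(∫ ω, g ω ∂P) := by linarith
    calc Np J p * K' ≤ -(∫ ω, g ω ∂P) := h2
      _ ≤ |∫ ω, g ω ∂P| := neg_le_abs _
      _ ≤ _ := h1
  have hBdd : BddAbove {r : ℝ | ∃ v : (Fin J → V) → (Fin J → ℝ),
      Measurable v ∧ (∀ y, v y ∈ Bp J p) ∧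
      r = ∫ ω, |∑ j, ((MeasureTheory.condExp (MeasurableSpace.comap Yf inferInstance) P G) ω j - plug ω j) * v (Yf ω) j| ∂P} := by
    refine ⟨∑ j, ∫ ω, |(MeasureTheory.condExp (MeasurableSpace.comap Yf inferInstance) P G) ω j - plug ω j| ∂P, ?_⟩
    rintro r ⟨v, hvmeas, hvBp', rfl⟩
    calc ∫ ω, |∑ j, ((MeasureTheory.condExp (MeasurableSpace.comap Yf inferInstance) P G) ω j - plug ω j) * v (Yf ω) j| ∂P
        ≤ ∫ ω, ∑ j, |(MeasureTheory.condExp (MeasurableSpace.comap Yf inferInstance) P G) ω j - plug ω j| ∂P := by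
          refine integral_mono_of_nonneg (Filter.Eventually.of_forall fun ω => abs_nonneg _)
            (integrable_finset_sum _ fun j _ => (hΔint j).abs)
            (Filter.Eventually.of_forall fun ω => ?_)
          calc |∑ j, ((MeasureTheory.condExp (MeasurableSpace.comap Yf inferInstance) P G) ω j - plug ω j) * v (Yf ω) j|
              ≤ ∑ j, |((MeasureTheory.condExp (MeasurableSpace.comap Yf inferInstance) P G) ω j - plug ω j) * v (Yf ω) j| :=
                Finset.abs_sum_le_sum_abs _ _
            _ ≤ ∑ j, |(MeasureTheory.condExp (MeasurableSpace.comap Yf inferInstance) P G) ω j - plug ω j| := by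
                refine Finset.sum_le_sum fun j _ => ?_
                rw [abs_mul]
                exact mul_le_of_le_one_right (abs_nonneg _)
                  (abs_le_one_of_mem_Bp hp hJ0 (hvBp' (Yf ω)) j)
      _ = ∑ j, ∫ ω, |(MeasureTheory.condExp (MeasurableSpace.comap Yf inferInstance) P G) ω j - plug ω j| ∂P :=
          integral_finset_sum _ fun j _ => (hΔint j).abs
  have hmem : (∫ ω, |g ω| ∂P) ∈ {r : ℝ | ∃ v : (Fin J → V) → (Fin J → ℝ),
      Measurable v ∧ (∀ y, v y ∈ Bp J p) ∧
      r = ∫ ω, |∑ j, ((MeasureTheory.condExp (MeasurableSpace.comap Yf inferInstance) P G) ω j - plug ω j) * v (Yf ω) j| ∂P} :=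
    ⟨vv, hvvm, hvvBp, by rw [hg]⟩
  calc K' = (1 / Np J p) * (Np J p * K') := by
        rw [one_div, inv_mul_cancel_left₀ hNppos.ne']
    _ ≤ (1 / Np J p) * (∫ ω, |g ω| ∂P) :=
        mul_le_mul_of_nonneg_left habsge (by positivity)
    _ ≤ (1 / Np J p) * sSup {r : ℝ | ∃ v : (Fin J → V) → (Fin J → ℝ),
          Measurable v ∧ (∀ y, v y ∈ Bp J p) ∧
          r = ∫ ω, |∑ j, ((MeasureTheory.condExp (MeasurableSpace.comap Yf inferInstance) P G) ω j - plug ω j) * v (Yf ω) j| ∂P} :=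
        mul_le_mul_of_nonneg_left (le_csSup hBdd hmem) (by positivity)


end PolicyEB
end
end

section
/- (Crude bound on the empirical Bayes versus oracle posterior mean gap.) Let F̂ be a probability distribution on R² supported in {τ : ‖τ‖₂ ≤ M̄_J} where M̄_J = max_j max(‖Ẑ_j‖₂, 1). Suppose Assumptions 1, 3 hold, c̲ I₂ ⪯ Ω̂_t ⪯ c̄ I₂ for all t, and ‖χ̂ − χ₀‖∞ ≤ C₀ for a constant C₀ > 0. Then for every j, ‖θ̂_{j,F̂}* − θ_j*‖₂ ≤ C·Z̄_J, where θ̂_{j,F̂}* = α̂_{t_j} + Ω̂_{t_j}^{1/2} E_{F̂,Ψ̂_j}[τ | Ẑ_j], θ_j* = α_{t_j} + Ω_{t_j}^{1/2} E_{F₀,Ψ_j}[τ | Z_j], Z̄_J = max(max_{j≤J} ‖Z_j‖₂, 1), and C is a constant depending only on the hyperparameters and C₀. -/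
open MeasureTheory ProbabilityTheory Matrix Real Filter Set
open scoped ENNReal NNReal Classical

noncomputable section

namespace PolicyEB

attribute [local instance] Matrix.normedAddCommGroup Matrix.normedSpace

variable {J T : ℕ} {Ωs : Type}

section Helpers

lemma abs_le_ninf (v : V) (i : Fin 2) : |v i| ≤ ninf v := by
  fin_cases i
  · exact le_max_left _ _
  · exact le_max_right _ _

lemma n2_nonneg (v : V) : 0 ≤ n2 v := Real.sqrt_nonneg _

lemma n2_eq_sqrt_dot (v : V) : n2 v = Real.sqrt (v ⬝ᵥ v) := by
  simp [n2, dotProduct, Fin.sum_univ_two, sq]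

lemma abs_le_n2 (v : V) (i : Fin 2) : |v i| ≤ n2 v := by
  have h : v i ^ 2 ≤ v 0 ^ 2 + v 1 ^ 2 := by
    fin_cases i
    · show v 0 ^ 2 ≤ _; nlinarith [sq_nonneg (v 1)]
    · show v 1 ^ 2 ≤ _; nlinarith [sq_nonneg (v 0)]
  calc |v i| = Real.sqrt (v i ^ 2) := (Real.sqrt_sq_eq_abs _).symm
    _ ≤ n2 v := Real.sqrt_le_sqrt h

lemma n2_le_sum_abs (v : V) : n2 v ≤ |v 0| + |v 1| := by
  have h : v 0 ^ 2 + v 1 ^ 2 ≤ (|v 0| + |v 1|) ^ 2 := by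
    nlinarith [abs_nonneg (v 0), abs_nonneg (v 1), sq_abs (v 0), sq_abs (v 1)]
  calc n2 v ≤ Real.sqrt ((|v 0| + |v 1|) ^ 2) := Real.sqrt_le_sqrt h
    _ = |v 0| + |v 1| := Real.sqrt_sq (by positivity)

lemma quad_lower {B : M2} {c : ℝ} (h : LoewnerLE (c • (1:M2)) B) (x : V) :
    c * (x ⬝ᵥ x) ≤ x ⬝ᵥ B.mulVec x := by
  have := Matrix.PosSemidef.dotProduct_mulVec_nonneg h x
  simp only [sub_mulVec, dotProduct_sub, Matrix.smul_mulVec, Matrix.one_mulVec,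
    dotProduct_smul, star_trivial, smul_eq_mul] at this
  linarith

lemma quad_upper {B : M2} {c : ℝ} (h : LoewnerLE B (c • (1:M2))) (x : V) :
    x ⬝ᵥ B.mulVec x ≤ c * (x ⬝ᵥ x) := by
  have := Matrix.PosSemidef.dotProduct_mulVec_nonneg h x
  simp only [sub_mulVec, dotProduct_sub, Matrix.smul_mulVec, Matrix.one_mulVec,
    dotProduct_smul, star_trivial, smul_eq_mul] at this
  linarith

lemma dot_conj {A : M2} (hA : Aᵀ = A) (x : V) :
    (A.mulVec x) ⬝ᵥ (A.mulVec x) = x ⬝ᵥ (A*A).mulVec x := by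
  rw [← Matrix.mulVec_mulVec, Matrix.dotProduct_mulVec (A.mulVec x) A x]
  rw [← Matrix.mulVec_transpose, hA, dotProduct_comm, Matrix.dotProduct_mulVec,
    ← Matrix.mulVec_transpose, hA]

lemma smul_one_posDef {c : ℝ} (hc : 0 < c) : ((c • (1:M2))).PosDef := by
  rw [Matrix.smul_one_eq_diagonal]
  exact Matrix.posDef_diagonal_iff.mpr fun _ => hc

lemma sq_posDef_of_lower {A : M2} {c : ℝ} (hc : 0 < c) (h : LoewnerLE (c • (1:M2)) (A*A)) :
    (A*A).PosDef := by
  have e : A*A = (A*A - c • (1:M2)) + c • (1:M2) := by abel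
  rw [e]
  exact Matrix.PosDef.posSemidef_add h (smul_one_posDef hc)

lemma isUnit_det_of_sq {A : M2} (h : (A*A).PosDef) : IsUnit A.det := by
  have hd : 0 < A.det * A.det := by
    have := h.det_pos; rwa [Matrix.det_mul] at this
  rcases lt_or_gt_of_ne (fun h0 : A.det = 0 => by simp [h0] at hd) with h' | h'
  · exact h'.ne.isUnit
  · exact h'.ne'.isUnit

/-- `n2 (A *ᵥ x) ≤ √c * n2 x` when `A` symmetric with `A*A ⪯ c•1`. -/
lemma n2_mulVec_le {A : M2} {c : ℝ} (hc : 0 ≤ c) (hA : Aᵀ = A)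
    (h : LoewnerLE (A*A) (c • (1:M2))) (x : V) :
    n2 (A.mulVec x) ≤ Real.sqrt c * n2 x := by
  rw [n2_eq_sqrt_dot, n2_eq_sqrt_dot, ← Real.sqrt_mul hc]
  apply Real.sqrt_le_sqrt
  rw [dot_conj hA]
  exact quad_upper h x

/-- `n2 (A⁻¹ *ᵥ y) ≤ (√c)⁻¹ * n2 y` when `A` symmetric with `c•1 ⪯ A*A`, `c > 0`. -/
lemma n2_invVec_le {A : M2} {c : ℝ} (hc : 0 < c) (hA : Aᵀ = A)
    (h : LoewnerLE (c • (1:M2)) (A*A)) (y : V) :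
    n2 (A⁻¹.mulVec y) ≤ (Real.sqrt c)⁻¹ * n2 y := by
  have hu : IsUnit A.det := isUnit_det_of_sq (sq_posDef_of_lower hc h)
  set x := A⁻¹.mulVec y with hx
  have hAx : A.mulVec x = y := by
    rw [hx, Matrix.mulVec_mulVec, Matrix.mul_nonsing_inv A hu, Matrix.one_mulVec]
  have h1 : c * (x ⬝ᵥ x) ≤ y ⬝ᵥ y := by
    have := quad_lower h x
    rw [← dot_conj hA, hAx] at this
    exact this
  have h2 : x ⬝ᵥ x ≤ (y ⬝ᵥ y) / c := (le_div_iff₀' hc).mpr h1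
  rw [n2_eq_sqrt_dot, n2_eq_sqrt_dot]
  calc Real.sqrt (x ⬝ᵥ x) ≤ Real.sqrt ((y ⬝ᵥ y) / c) := Real.sqrt_le_sqrt h2
    _ = (Real.sqrt c)⁻¹ * Real.sqrt (y ⬝ᵥ y) := by
        rw [Real.sqrt_div' _ hc.le, div_eq_inv_mul]


lemma gk_pos (Ψ : M2) (x : V) : 0 < gk Ψ x := Real.exp_pos _

lemma gk_le_one {Ψ : M2} (hΨ : Ψ.PosDef) (x : V) : gk Ψ x ≤ 1 := by
  have h0 : 0 ≤ x ⬝ᵥ Ψ⁻¹.mulVec x := by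
    have := hΨ.inv.posSemidef.dotProduct_mulVec_nonneg x
    simpa using this
  unfold gk
  rw [Real.exp_le_one_iff]
  nlinarith

lemma gk_cont (Ψ : M2) (z : V) : Continuous fun τ : V => gk Ψ (z - τ) := by
  unfold gk
  simp only [dotProduct, Matrix.mulVec]
  fun_prop

/-- `B⁻¹ * S * B⁻¹` is positive definite when `B` symmetric invertible, `S` positive definite. -/
lemma conj_posDef {B S : M2} (hB : Bᵀ = B) (hBu : IsUnit B.det) (hS : S.PosDef) :
    (B⁻¹ * S * B⁻¹).PosDef := by
  have hBinvT : (B⁻¹)ᵀ = B⁻¹ := by rw [Matrix.transpose_nonsing_inv, hB]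
  refine Matrix.PosDef.of_dotProduct_mulVec_pos ?_ ?_
  · show (B⁻¹ * S * B⁻¹)ᵀ = _
    calc (B⁻¹ * S * B⁻¹)ᵀ = (B⁻¹)ᵀ * (Sᵀ * (B⁻¹)ᵀ) := by
          rw [Matrix.transpose_mul, Matrix.transpose_mul]
      _ = B⁻¹ * S * B⁻¹ := by
          have hST : Sᵀ = S := hS.1
          rw [hBinvT, hST, mul_assoc]
  · intro x hx
    have hxi : B⁻¹.mulVec x ≠ 0 := by
      intro h0
      apply hx
      have : B.mulVec (B⁻¹.mulVec x) = B.mulVec 0 := by rw [h0]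
      rwa [Matrix.mulVec_mulVec, Matrix.mul_nonsing_inv B hBu, Matrix.one_mulVec,
        Matrix.mulVec_zero] at this
    have key : x ⬝ᵥ (B⁻¹ * S * B⁻¹).mulVec x
        = (B⁻¹.mulVec x) ⬝ᵥ S.mulVec (B⁻¹.mulVec x) := by
      rw [← Matrix.mulVec_mulVec, ← Matrix.mulVec_mulVec, Matrix.dotProduct_mulVec x B⁻¹,
        ← Matrix.mulVec_transpose, hBinvT]
    have := hS.dotProduct_mulVec_pos hxi
    simp only [star_trivial] at this ⊢
    rwa [key]

lemma n2_smul (c : ℝ) (v : V) : n2 (c • v) = |c| * n2 v := by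
  simp only [n2, Pi.smul_apply, smul_eq_mul, mul_pow, ← mul_add]
  rw [Real.sqrt_mul (sq_nonneg c), Real.sqrt_sq_eq_abs]

lemma norm_le_n2 (v : V) : ‖v‖ ≤ n2 v := by
  rw [pi_norm_le_iff_of_nonneg (n2_nonneg v)]
  intro i
  simpa [Real.norm_eq_abs] using abs_le_n2 v i

/-- Crude bound on the posterior mean for a prior supported in a ball of radius `R`. -/
lemma postMean_n2_le (F : Measure V) [IsProbabilityMeasure F] {Ψ : M2} (hΨ : Ψ.PosDef)
    (z : V) {R : ℝ} (hR : 0 ≤ R) (hsupp : F {x : V | n2 x ≤ R}ᶜ = 0) :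
    n2 (postMean F Ψ z) ≤ 2 * R := by
  have hcont := gk_cont Ψ z
  have hae : ∀ᵐ τ ∂F, n2 τ ≤ R := by
    rw [ae_iff]
    simpa [Set.compl_setOf] using hsupp
  have hint1 : Integrable (fun τ => gk Ψ (z - τ)) F := by
    apply (integrable_const (1:ℝ)).mono' hcont.aestronglyMeasurable
    filter_upwards with τ
    rw [Real.norm_eq_abs, abs_of_pos (gk_pos _ _)]
    exact gk_le_one hΨ _
  have hd : 0 < ∫ τ, gk Ψ (z - τ) ∂F := by
    rw [integral_pos_iff_support_of_nonneg (fun τ => (gk_pos Ψ (z - τ)).le) hint1]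
    have : Function.support (fun τ : V => gk Ψ (z - τ)) = Set.univ := by
      ext τ; simp [Function.support, (gk_pos Ψ (z - τ)).ne']
    rw [this]
    simp
  set d := ∫ τ, gk Ψ (z - τ) ∂F with hdd
  have hintv : Integrable (fun τ => gk Ψ (z - τ) • τ) F := by
    apply (integrable_const R).mono' (hcont.aestronglyMeasurable.smul aestronglyMeasurable_id)
    filter_upwards [hae] with τ hτ
    show ‖gk Ψ (z - τ) • τ‖ ≤ R
    rw [norm_smul, Real.norm_eq_abs, abs_of_pos (gk_pos _ _)]
    calc gk Ψ (z - τ) * ‖τ‖ ≤ 1 * n2 τ := by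
          apply mul_le_mul (gk_le_one hΨ _) (norm_le_n2 τ) (norm_nonneg τ) zero_le_one
      _ ≤ R := by rw [one_mul]; exact hτ
  have hcomp : ∀ i : Fin 2, |(∫ τ, gk Ψ (z - τ) • τ ∂F) i| ≤ R * d := by
    intro i
    have hiapp : (∫ τ, gk Ψ (z - τ) • τ ∂F) i = ∫ τ, gk Ψ (z - τ) * τ i ∂F := by
      have := ((ContinuousLinearMap.proj i : V →L[ℝ] ℝ).integral_comp_comm hintv).symm
      simpa using this
    rw [hiapp]
    have hinti : Integrable (fun τ => gk Ψ (z - τ) * τ i) F := by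
      have := ((ContinuousLinearMap.proj i : V →L[ℝ] ℝ)).integrable_comp hintv
      simpa using this
    have hinti' : Integrable (fun τ => |gk Ψ (z - τ)| * |τ i|) F := by
      simpa only [abs_mul] using hinti.abs
    calc |∫ τ, gk Ψ (z - τ) * τ i ∂F| ≤ ∫ τ, |gk Ψ (z - τ)| * |τ i| ∂F := by
          simpa [Real.norm_eq_abs] using
            norm_integral_le_integral_norm (μ := F) (fun τ => gk Ψ (z - τ) * τ i)
      _ ≤ ∫ τ, R * gk Ψ (z - τ) ∂F := by
          apply integral_mono_ae hinti' (hint1.const_mul R)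
          filter_upwards [hae] with τ hτ
          rw [abs_of_pos (gk_pos _ _), mul_comm R]
          exact mul_le_mul_of_nonneg_left ((abs_le_n2 τ i).trans hτ) (gk_pos _ _).le
      _ = R * d := by rw [integral_const_mul]
  unfold postMean
  rw [n2_smul]
  have h1 := hcomp 0
  have h2 := hcomp 1
  have h3 := n2_le_sum_abs (∫ τ, gk Ψ (z - τ) • τ ∂F)
  rw [abs_inv, abs_of_pos hd]
  calc d⁻¹ * n2 (∫ τ, gk Ψ (z - τ) • τ ∂F) ≤ d⁻¹ * (R * d + R * d) := by
        apply mul_le_mul_of_nonneg_left (by linarith) (inv_nonneg.mpr hd.le)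
    _ = 2 * R := by field_simp; ring


end Helpers

/-- Lemma OA3.6: crude bound on the empirical Bayes versus oracle posterior
mean gap. -/
theorem lem_crude_gap
    (swl swh sgl sgh cl cu C0 : ℝ) (hcl : 0 < cl) (hcu : cl ≤ cu) (hC0 : 0 < C0) :
    ∃ C : ℝ, 0 < C ∧
      ∀ (J T : ℕ), 1 ≤ J → 1 ≤ T →
      ∀ (Ωs : Type) (_ : MeasurableSpace Ωs) (P : Measure Ωs)
        (t : Fin J → Fin T) (F0 : Measure V) (τ ε : Fin J → Ωs → V)
        (α : Fin T → V) (Ws : Fin T → M2) (Ss : Fin J → M2)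
        (ahat : Fin T → Ωs → V) (Whts : Fin T → Ωs → M2),
        Model P t F0 τ ε α Ws Ss swl swh sgl sgh →
        Assump3 Ws cl cu →
        ∀ (ω : Ωs) (Fh : Measure V), IsProbabilityMeasure Fh →
          Fh {x : V | n2 x ≤ ⨆ j, max (n2 (Zhat t α Ws Ss τ ε ahat Whts j ω)) 1}ᶜ = 0 →
          (∀ u, (Whts u ω).PosSemidef) →
          (∀ u, LoewnerLE (cl • (1 : M2)) (Whts u ω * Whts u ω)) →
          (∀ u, LoewnerLE (Whts u ω * Whts u ω) (cu • (1 : M2))) →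
          chiDist α Ws ahat Whts ω ≤ C0 →
          ∀ j, n2 (thetaHatStar (fun _ => Fh) t α Ws Ss τ ε ahat Whts j ω
                - thetaStar F0 t α Ws Ss τ ε j ω)
            ≤ C * Zbar t α Ws Ss τ ε ω := by
  have hcu0 : (0:ℝ) < cu := lt_of_lt_of_le hcl hcu
  set scu := Real.sqrt cu with hscu_def
  have hscu0 : 0 ≤ scu := Real.sqrt_nonneg _
  have hscl0 : (0:ℝ) < Real.sqrt cl := Real.sqrt_pos.mpr hcl
  set K := max ((2*scu + 2*C0)/Real.sqrt cl) 1 with hK_def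
  have hK1 : (1:ℝ) ≤ K := le_max_right _ _
  set B := max |swl| |swh| + max |sgl| |sgh| with hB_def
  have hB0 : (0:ℝ) ≤ B := by positivity
  have hsK : 0 ≤ scu * K := mul_nonneg hscu0 (zero_le_one.trans hK1)
  have hsB : 0 ≤ scu * B := mul_nonneg hscu0 hB0
  refine ⟨2*C0 + 4*scu*K + 4*scu*B + 1, by nlinarith, ?_⟩
  intro J T hJ hT Ωs _ P t F0 τ ε α Ws Ss ahat Whts hModel hA3 ω Fh hFhprob hFhsupp
    hWhpsd hWhlo hWhhi hchi j
  haveI : Nonempty (Fin J) := Fin.pos_iff_nonempty.mp hJ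
  haveI : Nonempty (Fin T) := Fin.pos_iff_nonempty.mp hT
  haveI : IsProbabilityMeasure F0 := hModel.probF
  haveI : IsProbabilityMeasure Fh := hFhprob
  have hWsym : ∀ u, (Ws u)ᵀ = Ws u := fun u => (hModel.Ws_psd u).1
  have hWhsym : ∀ u, (Whts u ω)ᵀ = Whts u ω := fun u => (hWhpsd u).1
  have hWdet : ∀ u, IsUnit (Ws u).det := fun u => isUnit_det_of_sq (hModel.Omega_pd u)
  have hWhdet : ∀ u, IsUnit (Whts u ω).det :=
    fun u => isUnit_det_of_sq (sq_posDef_of_lower hcl (hWhlo u))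
  -- chiDist components
  have hninf : ∀ u, ninf (ahat u ω - α u) ≤ C0 := by
    intro u
    refine le_trans ?_ hchi
    unfold chiDist
    exact le_trans (le_max_left _ _)
      (le_ciSup (f := fun u => max (ninf (ahat u ω - α u)) (opN (Whts u ω - Ws u)))
        (Set.Finite.bddAbove (Set.finite_range _)) u)
  -- Zbar facts
  set Zb := Zbar t α Ws Ss τ ε ω with hZb_def
  have hZb1 : (1:ℝ) ≤ Zb := by rw [hZb_def]; unfold Zbar; exact le_max_right _ _
  have hZle : ∀ j', n2 (Zres t α Ws Ss τ ε j' ω) ≤ Zb := by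
    intro j'
    rw [hZb_def]
    unfold Zbar
    exact le_trans (le_ciSup (f := fun j => n2 (Zres t α Ws Ss τ ε j ω))
      (Set.Finite.bddAbove (Set.finite_range _)) j') (le_max_left _ _)
  -- Y - α = W Z
  have hYα : ∀ j', obsY t α Ws Ss τ ε j' ω - α (t j')
      = (Ws (t j')).mulVec (Zres t α Ws Ss τ ε j' ω) := by
    intro j'
    unfold Zres
    rw [Matrix.mulVec_mulVec, Matrix.mul_nonsing_inv _ (hWdet _), Matrix.one_mulVec]
  -- bound on n2 Zhat
  have hZhat : ∀ j', n2 (Zhat t α Ws Ss τ ε ahat Whts j' ω) ≤ K * Zb := by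
    intro j'
    have hstep1 : n2 (Zhat t α Ws Ss τ ε ahat Whts j' ω)
        ≤ (Real.sqrt cl)⁻¹ * n2 (obsY t α Ws Ss τ ε j' ω - ahat (t j') ω) :=
      n2_invVec_le hcl (hWhsym _) (hWhlo _) _
    have hWZ : n2 (obsY t α Ws Ss τ ε j' ω - α (t j')) ≤ scu * Zb := by
      rw [hYα j']
      exact (n2_mulVec_le hcu0.le (hWsym _) (hA3.upper _) _).trans
        (mul_le_mul_of_nonneg_left (hZle j') hscu0)
    have hcompb : ∀ i : Fin 2, |(obsY t α Ws Ss τ ε j' ω - ahat (t j') ω) i|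
        ≤ scu * Zb + C0 := by
      intro i
      have he : (obsY t α Ws Ss τ ε j' ω - ahat (t j') ω) i
          = (obsY t α Ws Ss τ ε j' ω - α (t j')) i + (-(ahat (t j') ω - α (t j'))) i := by
        simp only [Pi.sub_apply, Pi.neg_apply]; ring
      rw [he]
      refine (abs_add_le _ _).trans (add_le_add ?_ ?_)
      · exact (abs_le_n2 _ i).trans hWZ
      · have : |(-(ahat (t j') ω - α (t j'))) i| = |(ahat (t j') ω - α (t j')) i| := by
          simp only [Pi.neg_apply, abs_neg]
        rw [this]
        exact (abs_le_ninf _ i).trans (hninf _)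
    have hn2b : n2 (obsY t α Ws Ss τ ε j' ω - ahat (t j') ω)
        ≤ 2 * (scu * Zb + C0) := by
      have := n2_le_sum_abs (obsY t α Ws Ss τ ε j' ω - ahat (t j') ω)
      have h0 := hcompb 0
      have h1 := hcompb 1
      linarith
    calc n2 (Zhat t α Ws Ss τ ε ahat Whts j' ω)
        ≤ (Real.sqrt cl)⁻¹ * (2 * (scu * Zb + C0)) := by
          refine hstep1.trans (mul_le_mul_of_nonneg_left hn2b (by positivity))
      _ = (2 * scu * Zb + 2 * C0) / Real.sqrt cl := by ring
      _ ≤ ((2 * scu + 2 * C0) / Real.sqrt cl) * Zb := by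
          rw [div_mul_eq_mul_div, div_le_div_iff_of_pos_right hscl0]
          nlinarith [hC0.le, hZb1, hscu0]
      _ ≤ K * Zb := by
          apply mul_le_mul_of_nonneg_right (le_max_left _ _) (zero_le_one.trans hZb1)
  -- bound on Mbar
  set Mb := ⨆ j', max (n2 (Zhat t α Ws Ss τ ε ahat Whts j' ω)) 1 with hMb_def
  have hMb1 : (1:ℝ) ≤ Mb := by
    have j0 : Fin J := Classical.arbitrary _
    refine le_trans (le_max_right (n2 (Zhat t α Ws Ss τ ε ahat Whts j0 ω)) 1)
      (le_ciSup (f := fun j' => max (n2 (Zhat t α Ws Ss τ ε ahat Whts j' ω)) 1)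
        (Set.Finite.bddAbove (Set.finite_range _)) j0)
  have hMb : Mb ≤ K * Zb := by
    refine ciSup_le fun j' => max_le (hZhat j') ?_
    calc (1:ℝ) ≤ K := hK1
      _ ≤ K * Zb := le_mul_of_one_le_right (zero_le_one.trans hK1) hZb1
  -- posdef of Psi matrices
  have hΨpd : (PsiM t Ws Ss j).PosDef := conj_posDef (hWsym _) (hWdet _) (hModel.Sigma_pd j)
  have hΨhpd : (PsiHat t Ss Whts j ω).PosDef :=
    conj_posDef (hWhsym _) (hWhdet _) (hModel.Sigma_pd j)
  -- F0 support
  have hBsupp : F0 {x : V | n2 x ≤ B}ᶜ = 0 := by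
    have h := hModel.suppF
    rw [ae_iff] at h
    refine measure_mono_null ?_ h
    intro x hx
    simp only [Set.mem_compl_iff, Set.mem_setOf_eq, not_le] at hx
    simp only [Set.mem_setOf_eq]
    intro hmem
    rcases hmem with ⟨⟨h1, h2⟩, ⟨h3, h4⟩⟩
    have hx0 : |x 0| ≤ max |swl| |swh| := by
      rw [abs_le]
      constructor
      · calc -(max |swl| |swh|) ≤ -|swl| := by simp [neg_le_neg_iff, le_max_left]
          _ ≤ swl := neg_abs_le swl
          _ ≤ x 0 := h1
      · exact h2.trans ((le_abs_self swh).trans (le_max_right _ _))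
    have hx1 : |x 1| ≤ max |sgl| |sgh| := by
      rw [abs_le]
      constructor
      · calc -(max |sgl| |sgh|) ≤ -|sgl| := by simp [neg_le_neg_iff, le_max_left]
          _ ≤ sgl := neg_abs_le sgl
          _ ≤ x 1 := h3
      · exact h4.trans ((le_abs_self sgh).trans (le_max_right _ _))
    have := n2_le_sum_abs x
    rw [hB_def] at hx
    linarith
  -- posterior mean bounds
  have hpm : n2 (postMean F0 (PsiM t Ws Ss j) (Zres t α Ws Ss τ ε j ω)) ≤ 2 * B :=
    postMean_n2_le F0 hΨpd _ hB0 hBsupp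
  have hpmh : n2 (postMean Fh (PsiHat t Ss Whts j ω) (Zhat t α Ws Ss τ ε ahat Whts j ω))
      ≤ 2 * Mb :=
    postMean_n2_le Fh hΨhpd _ (zero_le_one.trans hMb1) hFhsupp
  -- assemble
  set v1 := (Whts (t j) ω).mulVec
    (postMean Fh (PsiHat t Ss Whts j ω) (Zhat t α Ws Ss τ ε ahat Whts j ω)) with hv1
  set v0 := (Ws (t j)).mulVec
    (postMean F0 (PsiM t Ws Ss j) (Zres t α Ws Ss τ ε j ω)) with hv0
  have hv1b : n2 v1 ≤ scu * (2 * (K * Zb)) := by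
    refine (n2_mulVec_le hcu0.le (hWhsym _) (hWhhi _) _).trans
      (mul_le_mul_of_nonneg_left ?_ hscu0)
    exact hpmh.trans (by linarith)
  have hv0b : n2 v0 ≤ scu * (2 * B) :=
    (n2_mulVec_le hcu0.le (hWsym _) (hA3.upper _) _).trans
      (mul_le_mul_of_nonneg_left hpm hscu0)
  have heq : thetaHatStar (fun _ => Fh) t α Ws Ss τ ε ahat Whts j ω
      - thetaStar F0 t α Ws Ss τ ε j ω
      = (ahat (t j) ω - α (t j)) + (v1 - v0) := by
    unfold thetaHatStar thetaStar
    rw [hv1, hv0]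
    abel
  rw [heq]
  have hcompD : ∀ i : Fin 2, |((ahat (t j) ω - α (t j)) + (v1 - v0)) i|
      ≤ C0 + (scu * (2 * (K * Zb)) + scu * (2 * B)) := by
    intro i
    have he : ((ahat (t j) ω - α (t j)) + (v1 - v0)) i
        = (ahat (t j) ω - α (t j)) i + (v1 i + (-(v0)) i) := by
      simp only [Pi.add_apply, Pi.sub_apply, Pi.neg_apply]; ring
    rw [he]
    refine (abs_add_le _ _).trans (add_le_add ((abs_le_ninf _ i).trans (hninf _)) ?_)
    refine (abs_add_le _ _).trans (add_le_add ((abs_le_n2 _ i).trans hv1b) ?_)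
    have : |(-v0) i| = |v0 i| := by simp
    rw [this]
    exact (abs_le_n2 _ i).trans hv0b
  have hfin : n2 ((ahat (t j) ω - α (t j)) + (v1 - v0))
      ≤ 2 * C0 + 4 * scu * (K * Zb) + 4 * scu * B := by
    have := n2_le_sum_abs ((ahat (t j) ω - α (t j)) + (v1 - v0))
    have h0 := hcompD 0
    have h1 := hcompD 1
    linarith
  refine hfin.trans ?_
  have hZb0 : (0:ℝ) ≤ Zb := zero_le_one.trans hZb1
  nlinarith [mul_nonneg hsK hZb0, mul_nonneg hsB hZb0, mul_nonneg hC0.le (sub_nonneg.mpr hZb1)]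


end PolicyEB
end
end
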